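/- Let Y ⊆ H and κ < min Y, where jobs are in EDD order. Then g'_κ(Y) = max{ g'_{κ+1}(Y), p(J[1,κ]) − d_κ } and g'_κ(Y ∪ {κ}) = max{ g'_{κ+1}(Y), p(J[1,β]) − p(Y) − d_κ }. -/

import Mathlib

variable {n : ℕ}

/-- completion time of job `j` in the schedule given by the list `l`:
total processing time of the prefix of `l` up to and including `j`. -/
def comp (p : Fin n → ℕ) (l : List (Fin n)) (j : Fin n) : ℕ :=
  ((l.takeWhile fun k => decide (k ≠ j)).map p).sum + p j

/-- the elements of a finset listed in increasing index order. -/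
def sortF (s : Finset (Fin n)) : List (Fin n) := s.sort (· ≤ ·)

/-- a schedule is a permutation of all of the jobs. -/
def IsSchedule (l : List (Fin n)) : Prop := l.Perm (List.finRange n)

/-- the renting period of schedule `l`: from the start of the first r-job to
the completion of the last r-job. -/
def rent (p : Fin n → ℕ) (Jr : Finset (Fin n)) (hJr : Jr.Nonempty)
    (l : List (Fin n)) : ℤ :=
  (Jr.sup' hJr fun j => (comp p l j : ℤ)) -
    (Jr.inf' hJr fun j => (comp p l j : ℤ) - p j)

/-- `H`: the o-jobs with index between `α = min J^r` and `β = max J^r`. -/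
def Hset (Jr : Finset (Fin n)) (hJr : Jr.Nonempty) : Finset (Fin n) :=
  (Finset.Icc (Jr.min' hJr) (Jr.max' hJr)) \ Jr

/-- the five-block sequence `σ_{X,Y}`: blocks `J[1,α-1]`, `X`,
`J[α,β] \ (X ∪ Y)`, `Y`, `J[β+1,n]`, each internally in increasing index
(WSPT resp. EDD) order. -/
def fiveBlock (Jr : Finset (Fin n)) (hJr : Jr.Nonempty)
    (X Y : Finset (Fin n)) : List (Fin n) :=
  sortF (Finset.Iio (Jr.min' hJr)) ++ sortF X ++
    sortF ((Finset.Icc (Jr.min' hJr) (Jr.max' hJr)) \ (X ∪ Y)) ++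
    sortF Y ++ sortF (Finset.Ioi (Jr.max' hJr))

/-- `g'_κ(Y) = max_{j ∈ J[κ,β]} (C_j^{σ_{∅,Y}} - d_j)`. -/
def gDash (p : Fin n → ℕ) (d : Fin n → ℤ) (Jr : Finset (Fin n)) (hJr : Jr.Nonempty)
    (Y : Finset (Fin n)) (κ : Fin n)
    (h : (Finset.Icc κ (Jr.max' hJr)).Nonempty) : ℤ :=
  (Finset.Icc κ (Jr.max' hJr)).sup' h
    (fun j => (comp p (fiveBlock Jr hJr ∅ Y) j : ℤ) - d j)

section helpers
variable (p : Fin n → ℕ)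

lemma comp_cons_self (j : Fin n) (t : List (Fin n)) : comp p (j :: t) j = p j := by
  simp [comp, List.takeWhile_cons]

lemma comp_cons_ne {a j : Fin n} (h : a ≠ j) (t : List (Fin n)) :
    comp p (a :: t) j = p a + comp p t j := by
  simp [comp, List.takeWhile_cons, h, add_assoc]

lemma comp_append_of_mem {l1 : List (Fin n)} (l2 : List (Fin n)) {j : Fin n} (h : j ∈ l1) :
    comp p (l1 ++ l2) j = comp p l1 j := by
  induction l1 with
  | nil => simp at h
  | cons a t ih =>
    rcases eq_or_ne a j with rfl | ha
    · rw [List.cons_append, comp_cons_self, comp_cons_self]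
    · have hjt : j ∈ t := (List.mem_cons.mp h).resolve_left fun e => ha e.symm
      rw [List.cons_append, comp_cons_ne p ha, comp_cons_ne p ha, ih hjt]

lemma comp_append_of_not_mem {l1 : List (Fin n)} (l2 : List (Fin n)) {j : Fin n} (h : j ∉ l1) :
    comp p (l1 ++ l2) j = (l1.map p).sum + comp p l2 j := by
  induction l1 with
  | nil => simp
  | cons a t ih =>
    have ha : a ≠ j := fun e => h (e ▸ List.mem_cons_self)
    have hjt : j ∉ t := fun e => h (List.mem_cons_of_mem a e)
    rw [List.cons_append, comp_cons_ne p ha, ih hjt, List.map_cons, List.sum_cons, add_assoc]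

lemma comp_sorted {l : List (Fin n)} (hl : l.Pairwise (· < ·)) {j : Fin n} (hj : j ∈ l) :
    comp p l j = ((l.filter (fun k => k ≤ j)).map p).sum := by
  induction l with
  | nil => simp at hj
  | cons a t ih =>
    rw [List.pairwise_cons] at hl
    rcases eq_or_ne a j with rfl | ha
    · rw [comp_cons_self, List.filter_cons_of_pos (by simp)]
      have ht : t.filter (fun k => (decide (k ≤ a))) = [] := by
        rw [List.filter_eq_nil_iff]
        intro b hb
        simp [not_le.2 (hl.1 b hb)]
      simp [ht]
    · have hjt : j ∈ t := (List.mem_cons.mp hj).resolve_left fun e => ha e.symm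
      have haj : a ≤ j := (hl.1 j hjt).le
      rw [comp_cons_ne p ha, List.filter_cons_of_pos (by simp [haj]), List.map_cons,
        List.sum_cons, ih hl.2 hjt]

lemma sum_sortF (s : Finset (Fin n)) : ((sortF s).map p).sum = ∑ k ∈ s, p k := by
  rw [← Finset.sum_map_toList]
  exact ((Finset.sort_perm_toList s _).map p).sum_eq

lemma comp_sortF {s : Finset (Fin n)} {j : Fin n} (hj : j ∈ s) :
    comp p (sortF s) j = ∑ k ∈ s.filter (fun k => k ≤ j), p k := by
  rw [show sortF s = s.sort (· ≤ ·) from rfl,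
    comp_sorted p (Finset.sortedLT_sort s).pairwise (by simpa using hj)]
  rw [← Finset.sum_map_toList]
  refine List.Perm.sum_eq (List.Perm.map p ?_)
  refine List.perm_of_nodup_nodup_toFinset_eq ((Finset.sort_nodup s _).filter _)
    (Finset.nodup_toList _) ?_
  ext x
  simp [sortF, List.mem_filter, Finset.mem_sort, Finset.mem_filter]

end helpers

section block
variable (p : Fin n → ℕ) (Jr : Finset (Fin n)) (hJr : Jr.Nonempty)

lemma comp_fiveBlock_mid {Z : Finset (Fin n)} (hZ : Z ⊆ Hset Jr hJr)
    {j : Fin n} (hj1 : Jr.min' hJr ≤ j) (hj2 : j ≤ Jr.max' hJr) (hjZ : j ∉ Z) :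
    comp p (fiveBlock Jr hJr ∅ Z) j = ∑ k ∈ Finset.Iic j \ Z, p k := by
  have hZm : ∀ y ∈ Z, Jr.min' hJr ≤ y ∧ y ≤ Jr.max' hJr := fun y hy =>
    Finset.mem_Icc.mp (Finset.mem_sdiff.mp (hZ hy)).1
  have hemp : sortF (∅ : Finset (Fin n)) = [] := by simp [sortF]
  rw [fiveBlock, hemp, Finset.empty_union]
  simp only [List.append_nil, List.append_assoc]
  have hjA : j ∉ sortF (Finset.Iio (Jr.min' hJr)) := by
    simp only [sortF, Finset.mem_sort, Finset.mem_Iio]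
    exact not_lt.2 hj1
  have hjC' : j ∈ Finset.Icc (Jr.min' hJr) (Jr.max' hJr) \ Z := by
    simp [Finset.mem_sdiff, Finset.mem_Icc, hj1, hj2, hjZ]
  have hjC : j ∈ sortF (Finset.Icc (Jr.min' hJr) (Jr.max' hJr) \ Z) := by
    simpa [sortF, Finset.mem_sort] using hjC'
  rw [comp_append_of_not_mem p _ hjA, comp_append_of_mem p _ hjC,
    comp_sortF p hjC', sum_sortF]
  have hdis : Disjoint (Finset.Iio (Jr.min' hJr))
      ((Finset.Icc (Jr.min' hJr) (Jr.max' hJr) \ Z).filter (fun k => k ≤ j)) := by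
    rw [Finset.disjoint_left]
    intro x hx hx'
    rw [Finset.mem_Iio] at hx
    rw [Finset.mem_filter, Finset.mem_sdiff, Finset.mem_Icc] at hx'
    exact absurd hx'.1.1.1 (not_le.2 hx)
  have hset : Finset.Iio (Jr.min' hJr) ∪
      ((Finset.Icc (Jr.min' hJr) (Jr.max' hJr) \ Z).filter (fun k => k ≤ j)) =
      Finset.Iic j \ Z := by
    ext x
    simp only [Finset.mem_union, Finset.mem_Iio, Finset.mem_filter, Finset.mem_sdiff,
      Finset.mem_Icc, Finset.mem_Iic]
    constructor
    · rintro (hx | ⟨⟨⟨_, _⟩, hxZ⟩, hxj⟩)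
      · exact ⟨(hx.trans_le hj1).le, fun hxZ' => absurd (hZm x hxZ').1 (not_le.2 hx)⟩
      · exact ⟨hxj, hxZ⟩
    · rintro ⟨hxj, hxZ⟩
      rcases lt_or_ge x (Jr.min' hJr) with h | h
      · exact Or.inl h
      · exact Or.inr ⟨⟨⟨h, hxj.trans hj2⟩, hxZ⟩, hxj⟩
  rw [← hset, Finset.sum_union hdis]

lemma comp_fiveBlock_inZ {Z : Finset (Fin n)} (hZ : Z ⊆ Hset Jr hJr)
    {j : Fin n} (hjZ : j ∈ Z) :
    comp p (fiveBlock Jr hJr ∅ Z) j =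
      (∑ k ∈ Finset.Iic (Jr.max' hJr) \ Z, p k) + ∑ k ∈ Z.filter (fun k => k ≤ j), p k := by
  have hZm : ∀ y ∈ Z, Jr.min' hJr ≤ y ∧ y ≤ Jr.max' hJr := fun y hy =>
    Finset.mem_Icc.mp (Finset.mem_sdiff.mp (hZ hy)).1
  have hemp : sortF (∅ : Finset (Fin n)) = [] := by simp [sortF]
  rw [fiveBlock, hemp, Finset.empty_union]
  simp only [List.append_nil, List.append_assoc]
  have hjA : j ∉ sortF (Finset.Iio (Jr.min' hJr)) := by
    simp only [sortF, Finset.mem_sort, Finset.mem_Iio]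
    exact not_lt.2 (hZm j hjZ).1
  have hjC : j ∉ sortF (Finset.Icc (Jr.min' hJr) (Jr.max' hJr) \ Z) := by
    simp only [sortF, Finset.mem_sort, Finset.mem_sdiff]
    exact fun h => h.2 hjZ
  have hjD : j ∈ sortF Z := by simpa [sortF, Finset.mem_sort] using hjZ
  rw [comp_append_of_not_mem p _ hjA, comp_append_of_not_mem p _ hjC,
    comp_append_of_mem p _ hjD, comp_sortF p hjZ, sum_sortF, sum_sortF]
  have hdis : Disjoint (Finset.Iio (Jr.min' hJr))
      (Finset.Icc (Jr.min' hJr) (Jr.max' hJr) \ Z) := by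
    rw [Finset.disjoint_left]
    intro x hx hx'
    rw [Finset.mem_Iio] at hx
    rw [Finset.mem_sdiff, Finset.mem_Icc] at hx'
    exact absurd hx'.1.1 (not_le.2 hx)
  have hab : Jr.min' hJr ≤ Jr.max' hJr := Jr.min'_le _ (Jr.max'_mem hJr)
  have hset : Finset.Iio (Jr.min' hJr) ∪
      (Finset.Icc (Jr.min' hJr) (Jr.max' hJr) \ Z) =
      Finset.Iic (Jr.max' hJr) \ Z := by
    ext x
    simp only [Finset.mem_union, Finset.mem_Iio, Finset.mem_sdiff, Finset.mem_Icc,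
      Finset.mem_Iic]
    constructor
    · rintro (hx | ⟨⟨_, hx2⟩, hxZ⟩)
      · exact ⟨(hx.trans_le hab).le, fun hxZ' => absurd (hZm x hxZ').1 (not_le.2 hx)⟩
      · exact ⟨hx2, hxZ⟩
    · rintro ⟨hxj, hxZ⟩
      rcases lt_or_ge x (Jr.min' hJr) with h | h
      · exact Or.inl h
      · exact Or.inr ⟨⟨h, hxj⟩, hxZ⟩
  rw [← hset, Finset.sum_union hdis, add_assoc]

end block

lemma sup'_split (f : Fin n → ℤ) {κ κ' β : Fin n} (hsucc : (κ' : ℕ) = (κ : ℕ) + 1)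
    (hκβ : κ ≤ β) (h1 : (Finset.Icc κ β).Nonempty) (h2 : (Finset.Icc κ' β).Nonempty) :
    (Finset.Icc κ β).sup' h1 f = max (f κ) ((Finset.Icc κ' β).sup' h2 f) := by
  apply le_antisymm
  · refine Finset.sup'_le _ _ fun j hj => ?_
    rw [Finset.mem_Icc] at hj
    rcases eq_or_ne j κ with rfl | hne
    · exact le_max_left _ _
    · refine le_trans (Finset.le_sup' f ?_) (le_max_right _ _)
      rw [Finset.mem_Icc, Fin.le_def, hsucc]
      have h3 : (κ : ℕ) ≤ (j : ℕ) := hj.1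
      have h4 : (κ : ℕ) ≠ (j : ℕ) := fun e => hne (Fin.ext e.symm)
      exact ⟨by omega, hj.2⟩
  · refine max_le (Finset.le_sup' f (Finset.mem_Icc.mpr ⟨le_refl κ, hκβ⟩)) ?_
    refine Finset.sup'_le _ _ fun j hj => Finset.le_sup' f ?_
    rw [Finset.mem_Icc] at hj ⊢
    refine ⟨le_trans ?_ hj.1, hj.2⟩
    rw [Fin.le_def, hsucc]; omega


/-- for `Y ⊆ H` and `κ ∈ H` with `κ < min Y` (jobs in EDD order),
`g'_κ(Y) = max { g'_{κ+1}(Y), p(J[1,κ]) - d_κ }` and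
`g'_κ(Y ∪ {κ}) = max { g'_{κ+1}(Y), p(J[1,β]) - p(Y) - d_κ }`. -/
theorem stmt13 {n : ℕ} (p : Fin n → ℕ) (hp : ∀ j, 0 < p j)
    (d : Fin n → ℤ) (hd : Monotone d)
    (Jr : Finset (Fin n)) (hJr : Jr.Nonempty)
    (Y : Finset (Fin n)) (hY : Y ⊆ Hset Jr hJr)
    (κ κ' : Fin n) (hκ : κ ∈ Hset Jr hJr) (hmin : ∀ y ∈ Y, κ < y)
    (hsucc : (κ' : ℕ) = (κ : ℕ) + 1)
    (h1 : (Finset.Icc κ (Jr.max' hJr)).Nonempty)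
    (h2 : (Finset.Icc κ' (Jr.max' hJr)).Nonempty) :
    gDash p d Jr hJr Y κ h1 =
      max (gDash p d Jr hJr Y κ' h2) ((∑ j ∈ Finset.Iic κ, (p j : ℤ)) - d κ) ∧
    gDash p d Jr hJr (Y ∪ {κ}) κ h1 =
      max (gDash p d Jr hJr Y κ' h2)
        ((∑ j ∈ Finset.Iic (Jr.max' hJr), (p j : ℤ)) - (∑ j ∈ Y, (p j : ℤ)) - d κ) := by
  have hκs := Finset.mem_sdiff.mp hκ
  have hκ1 := Finset.mem_Icc.mp hκs.1
  have hκY : κ ∉ Y := fun h => lt_irrefl κ (hmin κ h)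
  have hHm : ∀ y ∈ Hset Jr hJr, Jr.min' hJr ≤ y ∧ y ≤ Jr.max' hJr := fun y hy =>
    Finset.mem_Icc.mp (Finset.mem_sdiff.mp hy).1
  set F : Fin n → ℤ := fun j => (comp p (fiveBlock Jr hJr ∅ Y) j : ℤ) - d j with hF
  set F' : Fin n → ℤ := fun j => (comp p (fiveBlock Jr hJr ∅ (Y ∪ {κ})) j : ℤ) - d j with hF'
  have hmemIcc : ∀ j ∈ Finset.Icc κ' (Jr.max' hJr), κ < j ∧ j ≤ Jr.max' hJr := by
    intro j hj
    rw [Finset.mem_Icc] at hj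
    refine ⟨?_, hj.2⟩
    have := hj.1
    rw [Fin.le_def, hsucc] at this
    rw [Fin.lt_def]; omega
  -- κ's value in σ_{∅,Y}
  have hIY : Finset.Iic κ \ Y = Finset.Iic κ := by
    ext x
    simp only [Finset.mem_sdiff, Finset.mem_Iic, and_iff_left_iff_imp]
    exact fun h hx => absurd h (not_le.2 (hmin x hx))
  have hFκ : F κ = (∑ j ∈ Finset.Iic κ, (p j : ℤ)) - d κ := by
    rw [hF]
    simp only
    rw [comp_fiveBlock_mid p Jr hJr hY hκ1.1 hκ1.2 hκY, hIY]
    push_cast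
    ring
  -- κ's value in σ_{∅,Y∪{κ}}
  have hYκ : Y ∪ {κ} ⊆ Hset Jr hJr := Finset.union_subset hY (by simpa using hκ)
  have hZβ : Y ∪ {κ} ⊆ Finset.Iic (Jr.max' hJr) := fun x hx =>
    Finset.mem_Iic.mpr (hHm x (hYκ hx)).2
  have hinsert : Y ∪ {κ} = insert κ Y := by
    ext x
    simp [Finset.mem_union, Finset.mem_insert, or_comm]
  have hFκ' : F' κ = (∑ j ∈ Finset.Iic (Jr.max' hJr), (p j : ℤ)) -
      (∑ j ∈ Y, (p j : ℤ)) - d κ := by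
    rw [hF']
    simp only
    rw [comp_fiveBlock_inZ p Jr hJr hYκ (by simp)]
    have hfilt : (Y ∪ {κ}).filter (fun k => k ≤ κ) = {κ} := by
      ext x
      simp only [Finset.mem_filter, Finset.mem_union, Finset.mem_singleton]
      constructor
      · rintro ⟨hx1 | rfl, hx2⟩
        · exact absurd hx2 (not_le.2 (hmin x hx1))
        · rfl
      · rintro rfl; exact ⟨Or.inr rfl, le_refl _⟩
    rw [hfilt, Finset.sum_singleton]
    have key : (∑ k ∈ Finset.Iic (Jr.max' hJr) \ (Y ∪ {κ}), p k) + (p κ + ∑ k ∈ Y, p k)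
        = ∑ k ∈ Finset.Iic (Jr.max' hJr), p k := by
      rw [← Finset.sum_sdiff hZβ]
      congr 1
      rw [hinsert, Finset.sum_insert hκY]
    have keyZ := congrArg (Nat.cast : ℕ → ℤ) key
    push_cast at keyZ
    push_cast
    linarith [keyZ]
  -- pointwise comparisons on Icc κ' β
  have claim1 : ∀ j ∈ Finset.Icc κ' (Jr.max' hJr), F' j ≤ F j := by
    intro j hj
    obtain ⟨hjκ, hjβ⟩ := hmemIcc j hj
    have hjα : Jr.min' hJr ≤ j := le_trans hκ1.1 hjκ.le
    by_cases hjY : j ∈ Y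
    · -- equal
      have e : comp p (fiveBlock Jr hJr ∅ (Y ∪ {κ})) j = comp p (fiveBlock Jr hJr ∅ Y) j := by
        rw [comp_fiveBlock_inZ p Jr hJr hYκ (Finset.mem_union_left _ hjY),
          comp_fiveBlock_inZ p Jr hJr hY hjY]
        have hset1 : Finset.Iic (Jr.max' hJr) \ (Y ∪ {κ}) =
            (Finset.Iic (Jr.max' hJr) \ Y).erase κ := by
          ext x
          simp only [Finset.mem_sdiff, Finset.mem_union, Finset.mem_singleton,
            Finset.mem_erase, Finset.mem_Iic]
          tauto
        have hκmem : κ ∈ Finset.Iic (Jr.max' hJr) \ Y := by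
          simp [Finset.mem_sdiff, Finset.mem_Iic, hκ1.2, hκY]
        have hset2 : (Y ∪ {κ}).filter (fun k => k ≤ j) =
            insert κ (Y.filter (fun k => k ≤ j)) := by
          ext x
          simp only [Finset.mem_filter, Finset.mem_union, Finset.mem_singleton,
            Finset.mem_insert]
          constructor
          · rintro ⟨hx1 | rfl, hx2⟩
            · exact Or.inr ⟨hx1, hx2⟩
            · exact Or.inl rfl
          · rintro (rfl | ⟨hx1, hx2⟩)
            · exact ⟨Or.inr rfl, hjκ.le⟩
            · exact ⟨Or.inl hx1, hx2⟩
        rw [hset1, hset2, Finset.sum_insert (by simp [Finset.mem_filter, hκY])]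
        have := Finset.sum_erase_add (Finset.Iic (Jr.max' hJr) \ Y) p hκmem
        omega
      rw [hF, hF']
      simp only [e, le_refl]
    · -- F' j ≤ F j by a subset argument
      have hjZ : j ∉ Y ∪ {κ} := by
        simp only [Finset.mem_union, Finset.mem_singleton]
        rintro (h | rfl)
        · exact hjY h
        · exact lt_irrefl _ hjκ
      rw [hF, hF']
      simp only
      rw [comp_fiveBlock_mid p Jr hJr hYκ hjα hjβ hjZ,
        comp_fiveBlock_mid p Jr hJr hY hjα hjβ hjY]
      have hsub : Finset.Iic j \ (Y ∪ {κ}) ⊆ Finset.Iic j \ Y :=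
        Finset.sdiff_subset_sdiff (le_refl _) (Finset.subset_union_left)
      have := Finset.sum_le_sum_of_subset (f := p) hsub
      have : ((∑ k ∈ Finset.Iic j \ (Y ∪ {κ}), p k : ℕ) : ℤ) ≤
          ((∑ k ∈ Finset.Iic j \ Y, p k : ℕ) : ℤ) := by exact_mod_cast this
      linarith
  have claim2 : ∀ j ∈ Finset.Icc κ' (Jr.max' hJr), F j ≤ max (F' j) (F' κ) := by
    intro j hj
    obtain ⟨hjκ, hjβ⟩ := hmemIcc j hj
    have hjα : Jr.min' hJr ≤ j := le_trans hκ1.1 hjκ.le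
    by_cases hjY : j ∈ Y
    · -- F j = F' j (same computation as above)
      have e : comp p (fiveBlock Jr hJr ∅ (Y ∪ {κ})) j = comp p (fiveBlock Jr hJr ∅ Y) j := by
        rw [comp_fiveBlock_inZ p Jr hJr hYκ (Finset.mem_union_left _ hjY),
          comp_fiveBlock_inZ p Jr hJr hY hjY]
        have hset1 : Finset.Iic (Jr.max' hJr) \ (Y ∪ {κ}) =
            (Finset.Iic (Jr.max' hJr) \ Y).erase κ := by
          ext x
          simp only [Finset.mem_sdiff, Finset.mem_union, Finset.mem_singleton,
            Finset.mem_erase, Finset.mem_Iic]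
          tauto
        have hκmem : κ ∈ Finset.Iic (Jr.max' hJr) \ Y := by
          simp [Finset.mem_sdiff, Finset.mem_Iic, hκ1.2, hκY]
        have hset2 : (Y ∪ {κ}).filter (fun k => k ≤ j) =
            insert κ (Y.filter (fun k => k ≤ j)) := by
          ext x
          simp only [Finset.mem_filter, Finset.mem_union, Finset.mem_singleton,
            Finset.mem_insert]
          constructor
          · rintro ⟨hx1 | rfl, hx2⟩
            · exact Or.inr ⟨hx1, hx2⟩
            · exact Or.inl rfl
          · rintro (rfl | ⟨hx1, hx2⟩)
            · exact ⟨Or.inr rfl, hjκ.le⟩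
            · exact ⟨Or.inl hx1, hx2⟩
        rw [hset1, hset2, Finset.sum_insert (by simp [Finset.mem_filter, hκY])]
        have := Finset.sum_erase_add (Finset.Iic (Jr.max' hJr) \ Y) p hκmem
        omega
      refine le_trans (le_of_eq ?_) (le_max_left _ _)
      rw [hF, hF']
      simp only [e]
    · -- F j ≤ F' κ
      refine le_trans ?_ (le_max_right _ _)
      rw [hF, hFκ']
      simp only
      rw [comp_fiveBlock_mid p Jr hJr hY hjα hjβ hjY]
      have hdis : Disjoint (Finset.Iic j \ Y) Y := Finset.sdiff_disjoint
      have hsub : (Finset.Iic j \ Y) ∪ Y ⊆ Finset.Iic (Jr.max' hJr) := by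
        intro x hx
        rcases Finset.mem_union.mp hx with hx | hx
        · exact Finset.mem_Iic.mpr (le_trans (Finset.mem_Iic.mp (Finset.mem_sdiff.mp hx).1) hjβ)
        · exact Finset.mem_Iic.mpr (hHm x (hY hx)).2
      have hsum : (∑ k ∈ Finset.Iic j \ Y, p k) + ∑ k ∈ Y, p k ≤
          ∑ k ∈ Finset.Iic (Jr.max' hJr), p k := by
        rw [← Finset.sum_union hdis]
        exact Finset.sum_le_sum_of_subset hsub
      have hsumZ : ((∑ k ∈ Finset.Iic j \ Y, p k : ℕ) : ℤ) + (∑ k ∈ Y, (p k : ℤ)) ≤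
          ∑ k ∈ Finset.Iic (Jr.max' hJr), (p k : ℤ) := by
        push_cast [← Nat.cast_sum]
        exact_mod_cast hsum
      have hdκj : d κ ≤ d j := hd hjκ.le
      linarith
  -- assemble
  have e1 : gDash p d Jr hJr Y κ h1 = max (F κ) ((Finset.Icc κ' (Jr.max' hJr)).sup' h2 F) :=
    sup'_split F hsucc hκ1.2 h1 h2
  have e2 : gDash p d Jr hJr (Y ∪ {κ}) κ h1 =
      max (F' κ) ((Finset.Icc κ' (Jr.max' hJr)).sup' h2 F') :=
    sup'_split F' hsucc hκ1.2 h1 h2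
  have e3 : gDash p d Jr hJr Y κ' h2 = (Finset.Icc κ' (Jr.max' hJr)).sup' h2 F := rfl
  have e4 : max (F' κ) ((Finset.Icc κ' (Jr.max' hJr)).sup' h2 F') =
      max (F' κ) ((Finset.Icc κ' (Jr.max' hJr)).sup' h2 F) := by
    apply le_antisymm
    · refine max_le (le_max_left _ _) ?_
      refine le_trans (Finset.sup'_le _ _ fun j hj =>
        le_trans (claim1 j hj) (Finset.le_sup' F hj)) (le_max_right _ _)
    · refine max_le (le_max_left _ _) ?_
      refine Finset.sup'_le _ _ fun j hj => ?_
      refine le_trans (claim2 j hj) (max_le ?_ (le_max_left _ _))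
      exact le_trans (Finset.le_sup' F' hj) (le_max_right _ _)
  constructor
  · rw [e1, hFκ, e3, max_comm]
  · rw [e2, e4, hFκ', e3, max_comm]
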